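/- Assume α ≥ (I/2 + λL)/(1 + I/2 + λL). Then for every i ≥ 2, t_i ≤ α·t_{i−1} + (1−α)·r_{i−1}, and consequently t_i ≤ α^{i−1}·t_1 + (1−α)·Σ_{j=1}^{i−1} α^{i−j−1}·r_j. -/

import Mathlib

open scoped RealInnerProductSpace

section Helpers

variable {E : Type*} [NormedAddCommGroup E] [InnerProductSpace ℝ E]

private lemma le_of_eps (a b : ℝ) (h : ∀ ε : ℝ, 0 < ε → a ≤ b + ε) : a ≤ b := by
  by_contra hc
  push_neg at hc
  have := h ((a - b) / 2) (by linarith)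
  linarith

private lemma young_ineq (g δ : E) (c : ℝ) (hc : 0 < c) :
    ⟪g, δ⟫ ≤ 1 / (2 * c) * ‖g‖ ^ 2 + c / 2 * ‖δ‖ ^ 2 := by
  have key : ‖g - c • δ‖ ^ 2 = ‖g‖ ^ 2 - 2 * c * ⟪g, δ⟫ + c ^ 2 * ‖δ‖ ^ 2 := by
    rw [norm_sub_sq_real, real_inner_smul_right, norm_smul]
    simp [abs_of_pos hc]
    ring
  have h0 : (0 : ℝ) ≤ ‖g - c • δ‖ ^ 2 := sq_nonneg _
  have h1 : 1 / (2 * c) * ‖g - c • δ‖ ^ 2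
      = 1 / (2 * c) * ‖g‖ ^ 2 + c / 2 * ‖δ‖ ^ 2 - ⟪g, δ⟫ := by
    rw [key]; field_simp; ring
  nlinarith [mul_nonneg (by positivity : (0:ℝ) ≤ 1 / (2 * c)) h0]

private lemma combo_norm (u v : E) (θ : ℝ) :
    ‖(1 - θ) • u + θ • v‖ ^ 2
      = (1 - θ) * ‖u‖ ^ 2 + θ * ‖v‖ ^ 2 - θ * (1 - θ) * ‖u - v‖ ^ 2 := by
  simp only [← real_inner_self_eq_norm_sq, inner_add_left, inner_add_right, inner_sub_left,
    inner_sub_right, real_inner_smul_left, real_inner_smul_right, real_inner_comm u v]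
  ring

private lemma convexOn_affine {s : Set E} (hs : Convex ℝ s) (c : ℝ) (v w : E) :
    ConvexOn ℝ s (fun y => c + ⟪v, y - w⟫) := by
  refine ⟨hs, fun p _ q _ a b ha hb hab => le_of_eq ?_⟩
  simp only [smul_eq_mul, inner_sub_right, inner_add_right, real_inner_smul_right]
  linear_combination (⟪v, w⟫ - c) * hab

private lemma convexOn_comb {s : Set E} {g1 g2 : E → ℝ} {a b : ℝ} (ha : 0 ≤ a) (hb : 0 ≤ b)
    (h1 : ConvexOn ℝ s g1) (h2 : ConvexOn ℝ s g2) :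
    ConvexOn ℝ s (fun y => a * g1 y + b * g2 y) :=
  (h1.smul ha).add (h2.smul hb)

/-- Strong minimality at the minimizer of a convex function plus a quadratic. -/
private lemma strong_min {s : Set E} (hsc : Convex ℝ s) {G : E → ℝ} (hG : ConvexOn ℝ s G)
    {c : ℝ} (hc : 0 < c) {m x0 : E} (hm : m ∈ s)
    (hmin : ∀ y ∈ s, G m + c * ‖m - x0‖ ^ 2 ≤ G y + c * ‖y - x0‖ ^ 2) :
    ∀ y ∈ s, G m + c * ‖m - x0‖ ^ 2 + c * ‖y - m‖ ^ 2 ≤ G y + c * ‖y - x0‖ ^ 2 := by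
  intro y hy
  set A := G m + c * ‖m - x0‖ ^ 2 with hA
  set B := G y + c * ‖y - x0‖ ^ 2 with hB
  set K := c * ‖y - m‖ ^ 2 with hKdef
  have hK0 : 0 ≤ K := by positivity
  apply le_of_eps
  intro ε hε
  set θ := min (ε / (K + 1)) (1 / 2) with hθdef
  have hθ0 : 0 < θ := lt_min (by positivity) (by norm_num)
  have hθ1 : θ < 1 := lt_of_le_of_lt (min_le_right _ _) (by norm_num)
  have hz : (1 - θ) • m + θ • y ∈ s := hsc hm hy (by linarith) hθ0.le (by ring)
  have h1 : G ((1 - θ) • m + θ • y) ≤ (1 - θ) * G m + θ * G y :=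
    hG.2 hm hy (by linarith) hθ0.le (by ring)
  have h2 : ‖((1 - θ) • m + θ • y) - x0‖ ^ 2
      = (1 - θ) * ‖m - x0‖ ^ 2 + θ * ‖y - x0‖ ^ 2 - θ * (1 - θ) * ‖y - m‖ ^ 2 := by
    have h4 : (1 - θ) • (m - x0) + θ • (y - x0) = ((1 - θ) • m + θ • y) - x0 := by
      rw [smul_sub, smul_sub]
      rw [show (1 - θ) • m - (1 - θ) • x0 + (θ • y - θ • x0)
            = (1 - θ) • m + θ • y - ((1 - θ) • x0 + θ • x0) from by abel]
      congr 1
      rw [← add_smul]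
      simp
    rw [← h4, combo_norm]
    have h5 : (m - x0) - (y - x0) = m - y := by abel
    rw [h5, norm_sub_rev m y]
  have hmin' := hmin _ hz
  have h8 : A ≤ (1 - θ) * A + θ * B - θ * (1 - θ) * K := by
    have h2' : c * ‖((1 - θ) • m + θ • y) - x0‖ ^ 2
        = c * ((1 - θ) * ‖m - x0‖ ^ 2 + θ * ‖y - x0‖ ^ 2 - θ * (1 - θ) * ‖y - m‖ ^ 2) := by
      rw [h2]
    rw [hA, hB, hKdef]
    nlinarith [hmin', h1, h2']
  have h5 : θ * (A + (1 - θ) * K) ≤ θ * B := by nlinarith [h8]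
  have h6 : A + (1 - θ) * K ≤ B := (mul_le_mul_iff_right₀ hθ0).mp h5
  have h7 : θ * K ≤ ε := by
    calc θ * K ≤ (ε / (K + 1)) * K := mul_le_mul_of_nonneg_right (min_le_left _ _) hK0
    _ ≤ ε := by
        rw [div_mul_eq_mul_div, div_le_iff₀ (by positivity)]
        nlinarith [hε.le, hK0]
  linarith

end Helpers

section Descent

variable {E : Type*} [NormedAddCommGroup E] [InnerProductSpace ℝ E] [CompleteSpace E]

/-- Descent lemma: quadratic upper bound for a function with Lipschitz gradient. -/
private lemma descent_lemma (f : E → ℝ) (hf : Differentiable ℝ f) {L : ℝ} (hL : 0 ≤ L)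
    (hLip : ∀ x y, ‖gradient f x - gradient f y‖ ≤ L * ‖x - y‖) (a b : E) :
    f b ≤ f a + ⟪gradient f a, b - a⟫ + L / 2 * ‖b - a‖ ^ 2 := by
  set δ := b - a with hδ
  have hc : ∀ t : ℝ, HasDerivAt (fun τ : ℝ => a + τ • δ) δ t := by
    intro t
    simpa using ((hasDerivAt_id t).smul_const δ).const_add a
  have hfd : ∀ t : ℝ, HasDerivAt (fun τ : ℝ => f (a + τ • δ)) ⟪gradient f (a + t • δ), δ⟫ t := by
    intro t
    have h1 := ((hf (a + t • δ)).hasGradientAt.hasFDerivAt).comp_hasDerivAt t (hc t)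
    simpa [InnerProductSpace.toDual_apply_apply, Function.comp_def] using h1
  set F : ℝ → ℝ := fun t => L / 2 * t ^ 2 * ‖δ‖ ^ 2 + t * ⟪gradient f a, δ⟫ + f a
      - f (a + t • δ) with hF
  have hFderiv : ∀ t : ℝ, HasDerivAt F
      (L * t * ‖δ‖ ^ 2 + ⟪gradient f a, δ⟫ - ⟪gradient f (a + t • δ), δ⟫) t := by
    intro t
    have h1 : HasDerivAt (fun τ : ℝ => L / 2 * τ ^ 2 * ‖δ‖ ^ 2)
        (L / 2 * (2 * t ^ 1) * ‖δ‖ ^ 2) t :=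
      ((hasDerivAt_pow 2 t).const_mul (L / 2)).mul_const (‖δ‖ ^ 2)
    have h2 : HasDerivAt (fun τ : ℝ => τ * ⟪gradient f a, δ⟫) (1 * ⟪gradient f a, δ⟫) t :=
      (hasDerivAt_id t).mul_const _
    have h3 := ((h1.add h2).add_const (f a)).sub (hfd t)
    exact h3.congr_deriv (by ring)
  have hmono : MonotoneOn F (Set.Icc (0 : ℝ) 1) := by
    apply monotoneOn_of_deriv_nonneg (convex_Icc 0 1)
    · exact Continuous.continuousOn (by
        have : ∀ t : ℝ, DifferentiableAt ℝ F t := fun t => (hFderiv t).differentiableAt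
        exact (Differentiable.continuous this))
    · intro t _
      exact (hFderiv t).differentiableAt.differentiableWithinAt
    · intro t ht
      rw [interior_Icc] at ht
      rw [(hFderiv t).deriv]
      have hlip := hLip (a + t • δ) a
      have h4 : ‖(a + t • δ) - a‖ = t * ‖δ‖ := by
        rw [add_sub_cancel_left, norm_smul, Real.norm_eq_abs, abs_of_pos ht.1]
      rw [h4] at hlip
      have h5 : ⟪gradient f (a + t • δ) - gradient f a, δ⟫
          ≤ ‖gradient f (a + t • δ) - gradient f a‖ * ‖δ‖ := real_inner_le_norm _ _
      have h6 : ⟪gradient f (a + t • δ) - gradient f a, δ⟫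
          = ⟪gradient f (a + t • δ), δ⟫ - ⟪gradient f a, δ⟫ := inner_sub_left _ _ _
      have h7 : ‖gradient f (a + t • δ) - gradient f a‖ * ‖δ‖ ≤ (L * (t * ‖δ‖)) * ‖δ‖ :=
        mul_le_mul_of_nonneg_right hlip (norm_nonneg _)
      nlinarith [h5, h6, h7]
  have h01 : F 0 ≤ F 1 := hmono (Set.mem_Icc.mpr ⟨le_refl _, by norm_num⟩)
    (Set.mem_Icc.mpr ⟨by norm_num, le_refl _⟩) (by norm_num)
  have hF0 : F 0 = 0 := by simp [hF]
  have hF1 : F 1 = L / 2 * ‖δ‖ ^ 2 + ⟪gradient f a, δ⟫ + f a - f b := by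
    simp only [hF, one_pow, one_mul, one_smul]
    have : a + δ = b := by rw [hδ]; abel
    rw [this]; ring
  rw [hF0, hF1] at h01
  linarith

end Descent

/-- In the setting of the proximal subproblem solver:
`f` differentiable with `L`-Lipschitz gradient, `h` proper closed convex with domain `s`,
`𝓛_1(x) = c_0 + ⟨s_0, x - x_0⟩ + h(x)`,
`𝓛_i = α 𝓛_{i-1} + (1-α) ℓ(·; x_{i-1}, s_{i-1})` for `i ≥ 2`,
`x_i` the minimizer of `𝓛_i^λ = 𝓛_i + (1/(2λ))‖· - x_0‖²`,
`u_i = α u_{i-1} + (1-α)[φ(x_i) + (1/(2λ))‖x_i - x_0‖²]` for `i ≥ 2`,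
`t_i = u_i - 𝓛_i^λ(x_i)` and `r_i = (λ/I)‖∇f(x_i) - s_i‖²`.
If `α ≥ (I/2 + λL)/(1 + I/2 + λL)`, then for every `i ≥ 2` one has
`t_i ≤ α t_{i-1} + (1-α) r_{i-1}` and consequently
`t_i ≤ α^{i-1} t_1 + (1-α) Σ_{j=1}^{i-1} α^{i-j-1} r_j`. -/
theorem stmt_8 {d : ℕ} (f : EuclideanSpace ℝ (Fin d) → ℝ) (hf : Differentiable ℝ f)
    (L : ℝ) (hL : 0 < L)
    (hLip : ∀ x y, ‖gradient f x - gradient f y‖ ≤ L * ‖x - y‖)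
    (s : Set (EuclideanSpace ℝ (Fin d))) (hs : s.Nonempty) (hcl : IsClosed s)
    (h : EuclideanSpace ℝ (Fin d) → ℝ) (hconv : ConvexOn ℝ s h)
    (hlsc : LowerSemicontinuousOn h s)
    (lam : ℝ) (hlam : 0 < lam) (I : ℕ) (hI : 1 ≤ I)
    (α : ℝ) (hα : α ∈ Set.Ioo (0 : ℝ) 1)
    (x0 : EuclideanSpace ℝ (Fin d)) (hx0 : x0 ∈ s)
    (c0 u1 : ℝ) (svec : ℕ → EuclideanSpace ℝ (Fin d))
    (x : ℕ → EuclideanSpace ℝ (Fin d))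
    (𝓛 : ℕ → EuclideanSpace ℝ (Fin d) → ℝ)
    (h𝓛1 : ∀ y, 𝓛 1 y = c0 + ⟪svec 0, y - x0⟫ + h y)
    (h𝓛rec : ∀ i, 2 ≤ i → ∀ y,
      𝓛 i y = α * 𝓛 (i - 1) y + (1 - α) * (f (x (i - 1)) + ⟪svec (i - 1), y - x (i - 1)⟫ + h y))
    -- `x_i` is the minimizer of `𝓛_i^λ` over `ℝ^d` (i.e. over `dom h`):
    (hxmem : ∀ i, 1 ≤ i → x i ∈ s)
    (hxmin : ∀ i, 1 ≤ i → ∀ y ∈ s,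
      𝓛 i (x i) + 1 / (2 * lam) * ‖x i - x0‖ ^ 2 ≤ 𝓛 i y + 1 / (2 * lam) * ‖y - x0‖ ^ 2)
    (u : ℕ → ℝ) (hu1 : u 1 = u1)
    (hurec : ∀ i, 2 ≤ i →
      u i = α * u (i - 1) + (1 - α) * (f (x i) + h (x i) + 1 / (2 * lam) * ‖x i - x0‖ ^ 2))
    (t r : ℕ → ℝ)
    (ht : ∀ i, t i = u i - (𝓛 i (x i) + 1 / (2 * lam) * ‖x i - x0‖ ^ 2))
    (hr : ∀ i, r i = lam / I * ‖gradient f (x i) - svec i‖ ^ 2)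
    (hαbound : ((I : ℝ) / 2 + lam * L) / (1 + (I : ℝ) / 2 + lam * L) ≤ α) :
    ∀ i, 2 ≤ i →
      t i ≤ α * t (i - 1) + (1 - α) * r (i - 1) ∧
      t i ≤ α ^ (i - 1) * t 1 + (1 - α) * ∑ j ∈ Finset.Icc 1 (i - 1), α ^ (i - j - 1) * r j := by
  obtain ⟨hα0, hα1⟩ := hα
  have hα1' : (0 : ℝ) ≤ 1 - α := by linarith
  have hI0 : (0 : ℝ) < I := by exact_mod_cast hI
  -- Convexity of each 𝓛 i on s
  have hLconv : ∀ i, 1 ≤ i → ConvexOn ℝ s (𝓛 i) := by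
    intro i hi
    induction i, hi using Nat.le_induction with
    | base =>
      have heq : 𝓛 1 = fun y => (c0 + ⟪svec 0, y - x0⟫) + h y := funext h𝓛1
      rw [heq]
      exact (convexOn_affine hconv.1 c0 (svec 0) x0).add hconv
    | succ n hn ih =>
      have heq : 𝓛 (n + 1) = fun y =>
          α * 𝓛 n y + (1 - α) * ((f (x n) + ⟪svec n, y - x n⟫) + h y) := by
        funext y
        have := h𝓛rec (n + 1) (by omega) y
        simpa using this
      rw [heq]
      exact convexOn_comb hα0.le hα1' ih ((convexOn_affine hconv.1 _ _ _).add hconv)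
  -- Strong minimality
  have hsmin : ∀ i, 1 ≤ i → ∀ y ∈ s,
      𝓛 i (x i) + 1 / (2 * lam) * ‖x i - x0‖ ^ 2 + 1 / (2 * lam) * ‖y - x i‖ ^ 2
        ≤ 𝓛 i y + 1 / (2 * lam) * ‖y - x0‖ ^ 2 := by
    intro i hi
    exact strong_min hconv.1 (hLconv i hi) (by positivity) (hxmem i hi) (hxmin i hi)
  -- The one-step bound
  have key : ∀ i, 2 ≤ i → t i ≤ α * t (i - 1) + (1 - α) * r (i - 1) := by
    intro i hi
    obtain ⟨p, rfl⟩ : ∃ p, i = p + 1 := ⟨i - 1, by omega⟩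
    have hp : 1 ≤ p := by omega
    simp only [Nat.add_sub_cancel]
    have hti := ht (p + 1)
    have htp := ht p
    have hui := hurec (p + 1) (by omega)
    rw [Nat.add_sub_cancel] at hui
    have hLi := h𝓛rec (p + 1) (by omega) (x (p + 1))
    rw [Nat.add_sub_cancel] at hLi
    have hmin := hsmin p hp (x (p + 1)) (hxmem (p + 1) (by omega))
    have hdes := descent_lemma f hf hL.le hLip (x p) (x (p + 1))
    have hyg := young_ineq (gradient f (x p) - svec p) (x (p + 1) - x p)
      ((I : ℝ) / (2 * lam)) (by positivity)
    have hyg' : ⟪gradient f (x p) - svec p, x (p + 1) - x p⟫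
        ≤ lam / I * ‖gradient f (x p) - svec p‖ ^ 2
          + (I : ℝ) / (4 * lam) * ‖x (p + 1) - x p‖ ^ 2 := by
      have e1 : 1 / (2 * ((I : ℝ) / (2 * lam))) = lam / I := by
        field_simp
      have e2 : ((I : ℝ) / (2 * lam)) / 2 = (I : ℝ) / (4 * lam) := by ring
      rw [e1, e2] at hyg
      exact hyg
    have hinner : ⟪gradient f (x p) - svec p, x (p + 1) - x p⟫
        = ⟪gradient f (x p), x (p + 1) - x p⟫ - ⟪svec p, x (p + 1) - x p⟫ :=
      inner_sub_left _ _ _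
    have hM : (1 - α) * ((I : ℝ) / 2 + lam * L) ≤ α := by
      have hden : (0 : ℝ) < 1 + (I : ℝ) / 2 + lam * L := by positivity
      rw [div_le_iff₀ hden] at hαbound
      nlinarith
    have hd2 : (0 : ℝ) ≤ ‖x (p + 1) - x p‖ ^ 2 := sq_nonneg _
    have hco : (1 - α) * (L / 2 + (I : ℝ) / (4 * lam)) ≤ α * (1 / (2 * lam)) := by
      rw [← sub_nonneg]
      have e3 : α * (1 / (2 * lam)) - (1 - α) * (L / 2 + (I : ℝ) / (4 * lam))
          = (α - (1 - α) * ((I : ℝ) / 2 + lam * L)) / (2 * lam) := by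
        field_simp
        ring
      rw [e3]
      apply div_nonneg (by linarith) (by linarith)
    have habs := mul_le_mul_of_nonneg_right hco hd2
    have e1 : t (p + 1)
        = α * (u p - (𝓛 p (x (p + 1)) + 1 / (2 * lam) * ‖x (p + 1) - x0‖ ^ 2))
          + (1 - α) * (f (x (p + 1)) - f (x p) - ⟪svec p, x (p + 1) - x p⟫) := by
      rw [hti, hui, hLi]
      ring
    have e2 : u p - (𝓛 p (x (p + 1)) + 1 / (2 * lam) * ‖x (p + 1) - x0‖ ^ 2)
        ≤ t p - 1 / (2 * lam) * ‖x (p + 1) - x p‖ ^ 2 := by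
      rw [htp]
      linarith [hmin]
    have e3 : f (x (p + 1)) - f (x p) - ⟪svec p, x (p + 1) - x p⟫
        ≤ lam / I * ‖gradient f (x p) - svec p‖ ^ 2
          + (L / 2 + (I : ℝ) / (4 * lam)) * ‖x (p + 1) - x p‖ ^ 2 := by
      linarith [hdes, hyg', hinner]
    have e2' := mul_le_mul_of_nonneg_left e2 hα0.le
    have e3' := mul_le_mul_of_nonneg_left e3 hα1'
    have hrp' : (1 - α) * r p = (1 - α) * (lam / I * ‖gradient f (x p) - svec p‖ ^ 2) := by
      rw [hr p]
    linarith [e1, e2', e3', habs, hrp']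
  -- The summed bound by induction
  have part2 : ∀ i, 2 ≤ i →
      t i ≤ α ^ (i - 1) * t 1 + (1 - α) * ∑ j ∈ Finset.Icc 1 (i - 1), α ^ (i - j - 1) * r j := by
    intro i hi
    induction i, hi using Nat.le_induction with
    | base =>
      have hk := key 2 le_rfl
      simp only [show (2 : ℕ) - 1 = 1 from rfl] at hk ⊢
      rw [Finset.Icc_self, Finset.sum_singleton]
      norm_num
      linarith
    | succ n hn ih =>
      have hk := key (n + 1) (by omega)
      rw [Nat.add_sub_cancel] at hk
      simp only [Nat.add_sub_cancel]
      have ih' := mul_le_mul_of_nonneg_left ih hα0.le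
      have hpow : α * α ^ (n - 1) = α ^ n := by
        rw [← pow_succ']
        congr 1
        omega
      -- rewrite the goal sum
      have hgoal_exp : ∀ j, n + 1 - j - 1 = n - j := fun j => by omega
      have hsum_goal : ∑ j ∈ Finset.Icc 1 n, α ^ (n + 1 - j - 1) * r j
          = ∑ j ∈ Finset.Icc 1 n, α ^ (n - j) * r j :=
        Finset.sum_congr rfl fun j _ => by rw [hgoal_exp j]
      have hIcc : Finset.Icc 1 n = Finset.Icc 1 (n - 1 + 1) := by
        rw [Nat.sub_add_cancel (by omega)]
      have hsplit : ∑ j ∈ Finset.Icc 1 n, α ^ (n - j) * r j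
          = (∑ j ∈ Finset.Icc 1 (n - 1), α ^ (n - j) * r j) + α ^ (n - (n - 1 + 1)) * r (n - 1 + 1) := by
        rw [hIcc, Finset.sum_Icc_succ_top (by omega)]
      have hlast : α ^ (n - (n - 1 + 1)) * r (n - 1 + 1) = r n := by
        rw [Nat.sub_add_cancel (by omega)]
        simp
      have hterm : ∑ j ∈ Finset.Icc 1 (n - 1), α * (α ^ (n - j - 1) * r j)
          = ∑ j ∈ Finset.Icc 1 (n - 1), α ^ (n - j) * r j := by
        refine Finset.sum_congr rfl fun j hj => ?_
        have hj' : j ≤ n - 1 := (Finset.mem_Icc.mp hj).2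
        rw [← mul_assoc, ← pow_succ']
        congr 2
        omega
      have hmulsum : α * ∑ j ∈ Finset.Icc 1 (n - 1), α ^ (n - j - 1) * r j
          = ∑ j ∈ Finset.Icc 1 (n - 1), α ^ (n - j) * r j := by
        rw [Finset.mul_sum, hterm]
      calc t (n + 1) ≤ α * t n + (1 - α) * r n := hk
        _ ≤ α * (α ^ (n - 1) * t 1 + (1 - α) * ∑ j ∈ Finset.Icc 1 (n - 1), α ^ (n - j - 1) * r j)
            + (1 - α) * r n := by linarith [ih']
        _ = α ^ n * t 1 + (1 - α) * ∑ j ∈ Finset.Icc 1 n, α ^ (n + 1 - j - 1) * r j := by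
            rw [hsum_goal, hsplit, hlast, ← hmulsum, ← hpow]
            ring
  intro i hi
  exact ⟨key i hi, part2 i hi⟩
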